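/- Let f : [0,1]^d → ℝ satisfy the mixed α-Hölder condition: the iterated difference δ_{x_d}⋯δ_{x_1} f is bounded by C ∏_i |x_i' − x_i|^α. Let Q^{j_i} denote the dyadic martingale difference operator at scale j_i in direction i. Then ‖Q^{j_d} Q^{j_{d-1}} ⋯ Q^{j_1} f‖_{L^∞([0,1]^d)} ≤ C'·2^{-(j_1 + j_2 + ⋯ + j_d)α}, with C' depending only on C and d. -/

import Mathlib

open MeasureTheory

variable {d : ℕ}

/-- Dyadic averaging at scale `j` in direction `i` for `f : (Fin d → ℝ) → ℝ`. -/
noncomputable def avgDir (i : Fin d) (j : ℕ) (f : (Fin d → ℝ) → ℝ)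
    (x : Fin d → ℝ) : ℝ :=
  (2:ℝ)^j * ∫ s in Set.Ioc (((⌈(2:ℝ)^j * x i⌉ : ℝ) - 1) / (2:ℝ)^j)
      ((⌈(2:ℝ)^j * x i⌉ : ℝ) / (2:ℝ)^j), f (Function.update x i s)

/-- Martingale difference at scale `j` in direction `i`. -/
noncomputable def diffDir (i : Fin d) (j : ℕ) (f : (Fin d → ℝ) → ℝ)
    (x : Fin d → ℝ) : ℝ :=
  avgDir i (j+1) f x - avgDir i j f x

namespace IDBAux




noncomputable def lo (m : ℕ) (r : ℝ) : ℝ := ((⌈(2:ℝ)^m * r⌉ : ℝ) - 1) / (2:ℝ)^m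
noncomputable def hi (m : ℕ) (r : ℝ) : ℝ := (⌈(2:ℝ)^m * r⌉ : ℝ) / (2:ℝ)^m

lemma two_pow_pos (m : ℕ) : (0:ℝ) < 2^m := by positivity

lemma lo_lt (m : ℕ) (r : ℝ) : lo m r < r := by
  have h2 := two_pow_pos m
  rw [lo, div_lt_iff₀ h2]
  have := Int.ceil_lt_add_one ((2:ℝ)^m * r)
  nlinarith

lemma le_hi (m : ℕ) (r : ℝ) : r ≤ hi m r := by
  have h2 := two_pow_pos m
  rw [hi, le_div_iff₀ h2]
  have := Int.le_ceil ((2:ℝ)^m * r)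
  nlinarith

lemma lo_nonneg (m : ℕ) {r : ℝ} (hr : 0 < r) : 0 ≤ lo m r := by
  have h2 := two_pow_pos m
  have h1 : (1:ℤ) ≤ ⌈(2:ℝ)^m * r⌉ := Int.ceil_pos.mpr (by positivity)
  have h1' : (1:ℝ) ≤ (⌈(2:ℝ)^m * r⌉ : ℝ) := by exact_mod_cast h1
  apply div_nonneg _ h2.le
  linarith

lemma hi_le_one (m : ℕ) {r : ℝ} (hr : r ≤ 1) : hi m r ≤ 1 := by
  have h2 := two_pow_pos m
  have h1 : ⌈(2:ℝ)^m * r⌉ ≤ (2^m : ℤ) := Int.ceil_le.mpr (by push_cast; nlinarith)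
  have h1' : (⌈(2:ℝ)^m * r⌉ : ℝ) ≤ (2:ℝ)^m := by exact_mod_cast h1
  rw [hi, div_le_one h2]
  exact h1'

lemma hi_sub_lo (m : ℕ) (r : ℝ) : hi m r - lo m r = ((2:ℝ)^m)⁻¹ := by
  have h2 := two_pow_pos m
  rw [hi, lo]
  field_simp
  ring

lemma lo_mono (m : ℕ) (r : ℝ) : lo m r ≤ lo (m+1) r := by
  have h2 := two_pow_pos m
  have h2' := two_pow_pos (m+1)
  have hpow : (2:ℝ)^(m+1) = 2 * 2^m := by ring
  have key : (2 * ⌈(2:ℝ)^m * r⌉ - 2 : ℤ) < ⌈(2:ℝ)^(m+1) * r⌉ := by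
    apply Int.lt_ceil.mpr
    have := Int.ceil_lt_add_one ((2:ℝ)^m * r)
    push_cast
    ring_nf
    ring_nf at this
    nlinarith
  have key' : (2 * ⌈(2:ℝ)^m * r⌉ - 1 : ℤ) ≤ ⌈(2:ℝ)^(m+1) * r⌉ := by omega
  have key'' : (2 * (⌈(2:ℝ)^m * r⌉:ℝ) - 1 : ℝ) ≤ (⌈(2:ℝ)^(m+1) * r⌉ : ℝ) := by exact_mod_cast key'
  rw [lo, lo, div_le_div_iff₀ h2 h2', hpow]
  have h3 := mul_le_mul_of_nonneg_right
    (show 2*(⌈(2:ℝ)^m * r⌉:ℝ) - 2 ≤ (⌈(2:ℝ)^(m+1) * r⌉:ℝ) - 1 by linarith) h2.le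
  ring_nf
  ring_nf at h3
  linarith

lemma hi_anti (m : ℕ) (r : ℝ) : hi (m+1) r ≤ hi m r := by
  have h2 := two_pow_pos m
  have h2' := two_pow_pos (m+1)
  have hpow : (2:ℝ)^(m+1) = 2 * 2^m := by ring
  have key : ⌈(2:ℝ)^(m+1) * r⌉ ≤ 2 * ⌈(2:ℝ)^m * r⌉ := by
    apply Int.ceil_le.mpr
    have := Int.le_ceil ((2:ℝ)^m * r)
    push_cast
    rw [hpow]
    ring_nf
    ring_nf at this
    linarith
  have key' : ((⌈(2:ℝ)^(m+1) * r⌉:ℝ)) ≤ 2 * (⌈(2:ℝ)^m * r⌉:ℝ) := by exact_mod_cast key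
  rw [hi, hi, div_le_div_iff₀ h2' h2, hpow]
  have h3 := mul_le_mul_of_nonneg_right key' h2.le
  ring_nf
  ring_nf at h3
  linarith




variable {d : ℕ}

def mix (x y : Fin d → ℝ) (T : Finset (Fin d)) : Fin d → ℝ :=
  fun i => if i ∈ T then y i else x i

noncomputable def mixSum (A : Finset (Fin d)) (g : (Fin d → ℝ) → ℝ)
    (x y : Fin d → ℝ) : ℝ :=
  ∑ T ∈ A.powerset, (-1:ℝ)^(A.card - T.card) * g (mix x y T)

def ContOn (A : Finset (Fin d)) (g : (Fin d → ℝ) → ℝ) : Prop :=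
  ∀ z : Fin d → ℝ, Continuous fun w : Fin d → ℝ => g fun i => if i ∈ A then w i else z i

def Inv (α : ℝ) (A : Finset (Fin d)) (M : ℝ) (g : (Fin d → ℝ) → ℝ) : Prop :=
  ∀ x y : Fin d → ℝ, (∀ i, x i ∈ Set.Icc (0:ℝ) 1) → (∀ i, y i ∈ Set.Icc (0:ℝ) 1) →
    (∀ i ∉ A, x i ∈ Set.Ioc (0:ℝ) 1) →
    |mixSum A g x y| ≤ M * ∏ i ∈ A, |y i - x i| ^ α

lemma mixSum_empty (g : (Fin d → ℝ) → ℝ) (x y : Fin d → ℝ) :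
    mixSum (∅ : Finset (Fin d)) g x y = g x := by
  have : mix x y (∅ : Finset (Fin d)) = x := by
    funext i; simp [mix]
  simp [mixSum, this]

lemma contOn_update {A : Finset (Fin d)} {g : (Fin d → ℝ) → ℝ} (hg : ContOn A g)
    {k : Fin d} (hk : k ∈ A) (z : Fin d → ℝ) :
    Continuous fun s : ℝ => g (Function.update z k s) := by
  have h := hg z
  have heq : (fun s : ℝ => g (Function.update z k s)) =
      (fun w : Fin d → ℝ => g fun i => if i ∈ A then w i else z i) ∘
        fun s : ℝ => Function.update z k s := by
    funext s
    simp only [Function.comp_apply]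
    congr 1
    funext i
    by_cases hiA : i ∈ A
    · simp [hiA]
    · have hik : i ≠ k := fun h' => hiA (h' ▸ hk)
      simp [hiA, Function.update_of_ne hik]
  rw [heq]
  exact h.comp (continuous_const.update k continuous_id)

lemma continuous_param (G : (Fin d → ℝ) → ℝ) (hG : Continuous G) (k : Fin d) (a b : ℝ) :
    Continuous fun w : Fin d → ℝ => ∫ s in Set.Ioc a b, G (Function.update w k s) := by
  rw [continuous_iff_continuousAt]
  intro w₀
  have hcpt : IsCompact ((fun p : (Fin d → ℝ) × ℝ => Function.update p.1 k p.2) ''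
      (Metric.closedBall w₀ 1 ×ˢ Set.Icc a b)) :=
    ((isCompact_closedBall w₀ 1).prod isCompact_Icc).image
      (continuous_fst.update k continuous_snd)
  obtain ⟨Cb, hCb⟩ := hcpt.exists_bound_of_continuousOn hG.continuousOn
  apply MeasureTheory.continuousAt_of_dominated (bound := fun _ => Cb)
  · exact Filter.Eventually.of_forall fun w =>
      (hG.comp (continuous_const.update k continuous_id)).aestronglyMeasurable
  · filter_upwards [Metric.closedBall_mem_nhds w₀ one_pos] with w hw
    refine (MeasureTheory.ae_restrict_iff' measurableSet_Ioc).mpr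
      (Filter.Eventually.of_forall fun s hs => ?_)
    exact hCb _ ⟨(w, s), ⟨hw, Set.Ioc_subset_Icc_self hs⟩, rfl⟩
  · exact (integrableOn_const measure_Ioc_lt_top.ne)
  · exact Filter.Eventually.of_forall fun s =>
      (hG.comp (continuous_id.update k continuous_const)).continuousAt

lemma mixSum_split (A' : Finset (Fin d)) (k : Fin d) (hk : k ∉ A') (g : (Fin d → ℝ) → ℝ)
    (x y : Fin d → ℝ) (s t : ℝ) :
    mixSum (insert k A') g (Function.update x k t) (Function.update y k s) =
      ∑ T ∈ A'.powerset, (-1:ℝ)^(A'.card - T.card) *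
        (g (Function.update (mix x y T) k s) - g (Function.update (mix x y T) k t)) := by
  unfold mixSum
  rw [Finset.sum_powerset_insert hk]
  have hcard : (insert k A').card = A'.card + 1 := Finset.card_insert_of_notMem hk
  have h1 : ∀ T ∈ A'.powerset, (-1:ℝ)^((insert k A').card - T.card) *
      g (mix (Function.update x k t) (Function.update y k s) T) =
      -((-1:ℝ)^(A'.card - T.card) * g (Function.update (mix x y T) k t)) := by
    intro T hT
    rw [Finset.mem_powerset] at hT
    have hkT : k ∉ T := fun h => hk (hT h)
    have hm : mix (Function.update x k t) (Function.update y k s) T =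
        Function.update (mix x y T) k t := by
      funext i
      by_cases hik : i = k
      · subst hik; simp [mix, hkT]
      · by_cases hiT : i ∈ T <;>
          simp [mix, hiT, Function.update_of_ne hik]
    have hTc : T.card ≤ A'.card := Finset.card_le_card hT
    rw [hm, hcard, show A'.card + 1 - T.card = (A'.card - T.card) + 1 by omega, pow_succ]
    ring
  have h2 : ∀ T ∈ A'.powerset, (-1:ℝ)^((insert k A').card - (insert k T).card) *
      g (mix (Function.update x k t) (Function.update y k s) (insert k T)) =
      (-1:ℝ)^(A'.card - T.card) * g (Function.update (mix x y T) k s) := by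
    intro T hT
    rw [Finset.mem_powerset] at hT
    have hkT : k ∉ T := fun h => hk (hT h)
    have hm : mix (Function.update x k t) (Function.update y k s) (insert k T) =
        Function.update (mix x y T) k s := by
      funext i
      by_cases hik : i = k
      · subst hik; simp [mix]
      · by_cases hiT : i ∈ T <;>
          simp [mix, hiT, hik, Function.update_of_ne hik]
    rw [hm, hcard, Finset.card_insert_of_notMem hkT,
      show A'.card + 1 - (T.card + 1) = A'.card - T.card by omega]
  rw [Finset.sum_congr rfl h1, Finset.sum_congr rfl h2, ← Finset.sum_add_distrib]
  apply Finset.sum_congr rfl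
  intro T hT
  ring



lemma step {d : ℕ} (α : ℝ) (hα : 0 < α) (A : Finset (Fin d)) (k : Fin d) (hk : k ∈ A)
    (g : (Fin d → ℝ) → ℝ) (hg : ContOn A g) (M : ℝ) (hM : 0 ≤ M) (j : ℕ)
    (hInv : Inv α A M g) :
    ContOn (A.erase k) (diffDir k j g) ∧
      Inv α (A.erase k) (M * (((2:ℝ)^j)⁻¹) ^ α) (diffDir k j g) := by
  have h2j := two_pow_pos j
  have h2j1 := two_pow_pos (j+1)
  have hkA' : k ∉ A.erase k := Finset.notMem_erase k A
  have hins : insert k (A.erase k) = A := Finset.insert_erase hk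
  constructor
  · -- ContOn part
    intro z
    have hG : Continuous fun w : Fin d → ℝ => g fun i => if i ∈ A then w i else z i := hg z
    have havg : ∀ m : ℕ,
        (fun w : Fin d → ℝ => avgDir k m g fun i => if i ∈ A.erase k then w i else z i) =
        fun w : Fin d → ℝ => (2:ℝ)^m * ∫ s in Set.Ioc (lo m (z k)) (hi m (z k)),
            (fun w' : Fin d → ℝ => g fun i => if i ∈ A then w' i else z i)
              (Function.update w k s) := by
      intro m
      funext w
      have hzk : (if k ∈ A.erase k then w k else z k) = z k := by simp
      simp only [avgDir, hzk, lo, hi]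
      congr 1
      refine MeasureTheory.integral_congr_ae (Filter.Eventually.of_forall fun s => ?_)
      show g (Function.update (fun i => if i ∈ A.erase k then w i else z i) k s)
        = g fun i => if i ∈ A then Function.update w k s i else z i
      congr 1
      funext i
      by_cases hik : i = k
      · subst hik; simp [hk]
      · by_cases hiA : i ∈ A <;>
          simp [Function.update_of_ne hik, Finset.mem_erase, hik, hiA]
    simp only [diffDir]
    apply Continuous.sub
    · rw [havg (j+1)]
      exact continuous_const.mul (continuous_param _ hG k _ _)
    · rw [havg j]
      exact continuous_const.mul (continuous_param _ hG k _ _)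
  · -- Inv part
    intro x y hx hy hIoc
    have hxk : x k ∈ Set.Ioc (0:ℝ) 1 := hIoc k hkA'
    set r := x k with hr
    have hsub21 : Set.Ioc (lo (j+1) r) (hi (j+1) r) ⊆ Set.Ioc (lo j r) (hi j r) :=
      Set.Ioc_subset_Ioc (lo_mono j r) (hi_anti j r)
    have hsub1 : Set.Ioc (lo j r) (hi j r) ⊆ Set.Ioc 0 1 :=
      Set.Ioc_subset_Ioc (lo_nonneg j hxk.1) (hi_le_one j hxk.2)
    have hPcont : ∀ T : Finset (Fin d),
        Continuous fun s : ℝ => g (Function.update (mix x y T) k s) :=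
      fun T => contOn_update hg hk _
    have hPint : ∀ (T : Finset (Fin d)) (a b : ℝ),
        IntegrableOn (fun s => g (Function.update (mix x y T) k s)) (Set.Ioc a b) :=
      fun T a b => (hPcont T).integrableOn_Ioc
    have havg2 : ∀ (m : ℕ) (z : Fin d → ℝ), z k = r →
        avgDir k m g z = (2:ℝ)^m * ∫ s in Set.Ioc (lo m r) (hi m r),
          g (Function.update z k s) := by
      intro m z hz
      simp only [avgDir, hz, lo, hi]
    have hdiff : ∀ T ∈ (A.erase k).powerset, diffDir k j g (mix x y T) =
        (2:ℝ)^(j+1) * (∫ s in Set.Ioc (lo (j+1) r) (hi (j+1) r),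
            g (Function.update (mix x y T) k s))
          - (2:ℝ)^j * ∫ t in Set.Ioc (lo j r) (hi j r),
              g (Function.update (mix x y T) k t) := by
      intro T hT
      rw [Finset.mem_powerset] at hT
      have hkT : k ∉ T := fun h => hkA' (hT h)
      have hzk : mix x y T k = r := by simp [mix, hkT, hr]
      rw [diffDir, havg2 (j+1) _ hzk, havg2 j _ hzk]
    have key : mixSum (A.erase k) (diffDir k j g) x y =
        (2:ℝ)^(j+1) * ∫ s in Set.Ioc (lo (j+1) r) (hi (j+1) r),
          ∑ T ∈ (A.erase k).powerset, (-1:ℝ)^((A.erase k).card - T.card) *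
            (g (Function.update (mix x y T) k s)
              - (2:ℝ)^j * ∫ t in Set.Ioc (lo j r) (hi j r),
                  g (Function.update (mix x y T) k t)) := by
      rw [MeasureTheory.integral_finset_sum]
      swap
      · intro T hT
        exact (((hPcont T).sub continuous_const).integrableOn_Ioc).const_mul _
      rw [Finset.mul_sum]
      unfold mixSum
      apply Finset.sum_congr rfl
      intro T hT
      rw [hdiff T hT, MeasureTheory.integral_const_mul,
        MeasureTheory.integral_sub (hPint T _ _)
          (integrableOn_const measure_Ioc_lt_top.ne),
        MeasureTheory.setIntegral_const, Real.volume_real_Ioc, hi_sub_lo,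
        max_eq_left (inv_nonneg.mpr h2j1.le), smul_eq_mul]
      field_simp
      try ring
    have hprodnn : (0:ℝ) ≤ ∏ i ∈ A.erase k, |y i - x i| ^ α :=
      Finset.prod_nonneg fun i _ => Real.rpow_nonneg (abs_nonneg _) _
    have hbound : ∀ s ∈ Set.Ioc (lo (j+1) r) (hi (j+1) r),
        |∑ T ∈ (A.erase k).powerset, (-1:ℝ)^((A.erase k).card - T.card) *
          (g (Function.update (mix x y T) k s)
            - (2:ℝ)^j * ∫ t in Set.Ioc (lo j r) (hi j r),
                g (Function.update (mix x y T) k t))|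
          ≤ M * (((2:ℝ)^j)⁻¹) ^ α * ∏ i ∈ A.erase k, |y i - x i| ^ α := by
      intro s hs
      have hs1 : s ∈ Set.Ioc (lo j r) (hi j r) := hsub21 hs
      have hterm : ∀ T ∈ (A.erase k).powerset,
          (-1:ℝ)^((A.erase k).card - T.card) *
            (g (Function.update (mix x y T) k s)
              - (2:ℝ)^j * ∫ t in Set.Ioc (lo j r) (hi j r),
                  g (Function.update (mix x y T) k t)) =
          (2:ℝ)^j * ∫ t in Set.Ioc (lo j r) (hi j r),
            (-1:ℝ)^((A.erase k).card - T.card) *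
              (g (Function.update (mix x y T) k s)
                - g (Function.update (mix x y T) k t)) := by
        intro T hT
        rw [MeasureTheory.integral_const_mul,
          MeasureTheory.integral_sub
            (integrableOn_const (C := g (Function.update (mix x y T) k s))
              measure_Ioc_lt_top.ne) (hPint T _ _),
          MeasureTheory.setIntegral_const, Real.volume_real_Ioc, hi_sub_lo,
          max_eq_left (inv_nonneg.mpr h2j.le), smul_eq_mul]
        field_simp
        try ring
      rw [Finset.sum_congr rfl hterm, ← Finset.mul_sum,
        ← MeasureTheory.integral_finset_sum _ (f := fun T t =>
            (-1:ℝ)^((A.erase k).card - T.card) *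
              (g (Function.update (mix x y T) k s) - g (Function.update (mix x y T) k t)))
          (fun T _ => (((continuous_const.sub (hPcont T)).integrableOn_Ioc).const_mul
            ((-1:ℝ)^((A.erase k).card - T.card))))]
      rw [abs_mul, abs_of_pos h2j]
      have hW : ∀ t ∈ Set.Ioc (lo j r) (hi j r),
          ‖∑ T ∈ (A.erase k).powerset, (-1:ℝ)^((A.erase k).card - T.card) *
            (g (Function.update (mix x y T) k s)
              - g (Function.update (mix x y T) k t))‖
            ≤ M * (((2:ℝ)^j)⁻¹) ^ α * ∏ i ∈ A.erase k, |y i - x i| ^ α := by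
        intro t ht
        rw [Real.norm_eq_abs, ← mixSum_split (A.erase k) k hkA' g x y s t, hins]
        have hsI : s ∈ Set.Ioc (0:ℝ) 1 := hsub1 hs1
        have htI : t ∈ Set.Ioc (0:ℝ) 1 := hsub1 ht
        have hx' : ∀ i, Function.update x k t i ∈ Set.Icc (0:ℝ) 1 := by
          intro i
          by_cases hik : i = k
          · subst hik; simp only [Function.update_self]; exact ⟨htI.1.le, htI.2⟩
          · rw [Function.update_of_ne hik]; exact hx i
        have hy' : ∀ i, Function.update y k s i ∈ Set.Icc (0:ℝ) 1 := by
          intro i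
          by_cases hik : i = k
          · subst hik; simp only [Function.update_self]; exact ⟨hsI.1.le, hsI.2⟩
          · rw [Function.update_of_ne hik]; exact hy i
        have hIoc' : ∀ i ∉ A, Function.update x k t i ∈ Set.Ioc (0:ℝ) 1 := by
          intro i hiA
          have hik : i ≠ k := fun h => hiA (h ▸ hk)
          rw [Function.update_of_ne hik]
          exact hIoc i fun hmem => hiA (Finset.mem_of_mem_erase hmem)
        have happ := hInv (Function.update x k t) (Function.update y k s) hx' hy' hIoc'
        refine happ.trans ?_
        have hprodeq : ∏ i ∈ A, |Function.update y k s i - Function.update x k t i| ^ α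
            = |s - t| ^ α * ∏ i ∈ A.erase k, |y i - x i| ^ α := by
          conv_lhs => rw [← hins]
          rw [Finset.prod_insert hkA']
          congr 1
          · simp
          · apply Finset.prod_congr rfl
            intro i hi
            have hik : i ≠ k := (Finset.mem_erase.mp hi).1
            rw [Function.update_of_ne hik, Function.update_of_ne hik]
        rw [hprodeq]
        have habs : |s - t| ≤ ((2:ℝ)^j)⁻¹ := by
          have hd := hi_sub_lo j r
          rw [abs_sub_le_iff]
          constructor
          · linarith [hs1.2, ht.1]
          · linarith [hs1.1, ht.2]
        have hrw : |s - t| ^ α ≤ (((2:ℝ)^j)⁻¹) ^ α :=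
          Real.rpow_le_rpow (abs_nonneg _) habs hα.le
        have := mul_le_mul_of_nonneg_right hrw hprodnn
        calc M * (|s - t| ^ α * ∏ i ∈ A.erase k, |y i - x i| ^ α)
            ≤ M * ((((2:ℝ)^j)⁻¹) ^ α * ∏ i ∈ A.erase k, |y i - x i| ^ α) :=
              mul_le_mul_of_nonneg_left this hM
          _ = M * (((2:ℝ)^j)⁻¹) ^ α * ∏ i ∈ A.erase k, |y i - x i| ^ α := by ring
      have hnorm := MeasureTheory.norm_setIntegral_le_of_norm_le_const
        (measure_Ioc_lt_top : volume (Set.Ioc (lo j r) (hi j r)) < ⊤)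
        hW
      rw [Real.norm_eq_abs, Real.volume_real_Ioc, hi_sub_lo,
        max_eq_left (inv_nonneg.mpr h2j.le)] at hnorm
      calc (2:ℝ)^j * |∫ t in Set.Ioc (lo j r) (hi j r),
            ∑ T ∈ (A.erase k).powerset, (-1:ℝ)^((A.erase k).card - T.card) *
              (g (Function.update (mix x y T) k s)
                - g (Function.update (mix x y T) k t))|
          ≤ (2:ℝ)^j * ((M * (((2:ℝ)^j)⁻¹) ^ α * ∏ i ∈ A.erase k, |y i - x i| ^ α)
              * ((2:ℝ)^j)⁻¹) := mul_le_mul_of_nonneg_left hnorm h2j.le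
        _ = M * (((2:ℝ)^j)⁻¹) ^ α * ∏ i ∈ A.erase k, |y i - x i| ^ α := by
            field_simp
    rw [key, abs_mul, abs_of_pos h2j1]
    have hnorm := MeasureTheory.norm_setIntegral_le_of_norm_le_const
      (measure_Ioc_lt_top : volume (Set.Ioc (lo (j+1) r) (hi (j+1) r)) < ⊤)
      (fun s hs => (Real.norm_eq_abs _).trans_le (hbound s hs))
    rw [Real.norm_eq_abs, Real.volume_real_Ioc, hi_sub_lo,
      max_eq_left (inv_nonneg.mpr h2j1.le)] at hnorm
    calc (2:ℝ)^(j+1) * |∫ s in Set.Ioc (lo (j+1) r) (hi (j+1) r),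
          ∑ T ∈ (A.erase k).powerset, (-1:ℝ)^((A.erase k).card - T.card) *
            (g (Function.update (mix x y T) k s)
              - (2:ℝ)^j * ∫ t in Set.Ioc (lo j r) (hi j r),
                  g (Function.update (mix x y T) k t))|
        ≤ (2:ℝ)^(j+1) * ((M * (((2:ℝ)^j)⁻¹) ^ α * ∏ i ∈ A.erase k, |y i - x i| ^ α)
            * ((2:ℝ)^(j+1))⁻¹) := mul_le_mul_of_nonneg_left hnorm h2j1.le
      _ = M * (((2:ℝ)^j)⁻¹) ^ α * ∏ i ∈ A.erase k, |y i - x i| ^ α := by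
          field_simp

noncomputable def applyQ (j : Fin d → ℕ) : List (Fin d) → ((Fin d → ℝ) → ℝ) → ((Fin d → ℝ) → ℝ)
  | [], g => g
  | i :: l, g => diffDir i (j i) (applyQ j l g)

lemma foldr_eq (j : Fin d → ℕ) (f : (Fin d → ℝ) → ℝ) :
    ∀ l : List (Fin d),
      ((l.map fun i => diffDir i (j i)).foldr (fun T g => T ∘ g) id) f = applyQ j l f
  | [] => rfl
  | i :: l => by
      simp only [List.map_cons, List.foldr_cons, Function.comp_apply]
      rw [foldr_eq j f l]
      rfl

lemma recMain (α : ℝ) (hα : 0 < α) (j : Fin d → ℕ) :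
    ∀ (l : List (Fin d)), l.Nodup → ∀ (A : Finset (Fin d)) (g : (Fin d → ℝ) → ℝ) (M : ℝ),
      0 ≤ M → (∀ i ∈ l, i ∈ A) → ContOn A g → Inv α A M g →
      ContOn (A \ l.toFinset) (applyQ j l g) ∧
        Inv α (A \ l.toFinset) (M * ∏ i ∈ l.toFinset, (((2:ℝ)^(j i))⁻¹) ^ α) (applyQ j l g)
  | [], _, A, g, M, hM, _, hc, hi => by
      simpa [applyQ] using ⟨hc, hi⟩
  | i :: l, hnd, A, g, M, hM, hmem, hc, hi => by
      obtain ⟨hil, hnd'⟩ := List.nodup_cons.mp hnd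
      obtain ⟨hc', hi'⟩ := recMain α hα j l hnd' A g M hM
        (fun i' h => hmem i' (List.mem_cons_of_mem _ h)) hc hi
      have hiA : i ∈ A \ l.toFinset :=
        Finset.mem_sdiff.mpr ⟨hmem i (List.mem_cons_self), by simpa using hil⟩
      have hM' : 0 ≤ M * ∏ i' ∈ l.toFinset, (((2:ℝ)^(j i'))⁻¹) ^ α :=
        mul_nonneg hM (Finset.prod_nonneg fun _ _ => Real.rpow_nonneg (by positivity) _)
      obtain ⟨hc2, hi2⟩ := step α hα (A \ l.toFinset) i hiA _ hc' _ hM' (j i) hi'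
      have hset : (A \ l.toFinset).erase i = A \ (i :: l).toFinset := by
        ext a
        simp only [Finset.mem_erase, Finset.mem_sdiff, List.toFinset_cons,
          Finset.mem_insert, List.mem_toFinset]
        tauto
      have hconst : (M * ∏ i' ∈ l.toFinset, (((2:ℝ)^(j i'))⁻¹) ^ α) * (((2:ℝ)^(j i))⁻¹) ^ α
          = M * ∏ i' ∈ (i :: l).toFinset, (((2:ℝ)^(j i'))⁻¹) ^ α := by
        rw [List.toFinset_cons, Finset.prod_insert (by simpa using hil)]
        ring
      rw [hset, hconst] at hi2
      rw [hset] at hc2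
      exact ⟨hc2, hi2⟩

end IDBAux

/-- A mixed `α`-Hölder function on `[0,1]^d` has iterated martingale
differences `Q^{j_d}⋯Q^{j_1} f` bounded by `C' 2^{-(j_1+⋯+j_d)α}`. -/
theorem iterated_diff_bound_of_mixed_holder (α C : ℝ)
    (hα : 0 < α) (hα' : α < 1/2) (hC : 0 < C)
    (f : (Fin d → ℝ) → ℝ) (hcont : Continuous f)
    (hf : ∀ x y : Fin d → ℝ, (∀ i, x i ∈ Set.Icc (0:ℝ) 1) →
      (∀ i, y i ∈ Set.Icc (0:ℝ) 1) →
      |∑ S : Finset (Fin d), (-1:ℝ)^(d - S.card) *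
          f (fun i => if i ∈ S then y i else x i)|
        ≤ C * ∏ i, |y i - x i| ^ α) :
    ∃ C' > 0, ∀ j : Fin d → ℕ, ∀ x : Fin d → ℝ, (∀ i, x i ∈ Set.Ioc (0:ℝ) 1) →
      |((List.ofFn (fun i : Fin d => diffDir i (j i))).foldr
          (fun T g => T ∘ g) id f) x|
        ≤ C' * (2:ℝ) ^ (-α * ((∑ i, j i : ℕ) : ℝ)) := by
  refine ⟨C, hC, ?_⟩
  intro j x hx
  have hcont_univ : IDBAux.ContOn Finset.univ f := by
    intro z
    have h : (fun w : Fin d → ℝ => f fun i => if i ∈ Finset.univ then w i else z i) = f := by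
      funext w
      congr 1
      funext i
      simp
    rw [h]
    exact hcont
  have hinv_univ : IDBAux.Inv α Finset.univ C f := by
    intro x' y' hx' hy' _
    have h : IDBAux.mixSum Finset.univ f x' y' = ∑ S : Finset (Fin d),
        (-1:ℝ)^(d - S.card) * f (fun i => if i ∈ S then y' i else x' i) := by
      unfold IDBAux.mixSum
      rw [Finset.powerset_univ]
      apply Finset.sum_congr rfl
      intro S _
      have hcard : (Finset.univ : Finset (Fin d)).card = d := by simp
      rw [hcard]
      rfl
    rw [h]
    exact hf x' y' hx' hy'
  obtain ⟨_, hinv⟩ := IDBAux.recMain α hα j (List.finRange d) (List.nodup_finRange d)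
    Finset.univ f C hC.le (fun i _ => Finset.mem_univ i) hcont_univ hinv_univ
  have hset : Finset.univ \ (List.finRange d).toFinset = (∅ : Finset (Fin d)) := by
    simp [List.toFinset_finRange]
  rw [hset] at hinv
  have hxIcc : ∀ i, x i ∈ Set.Icc (0:ℝ) 1 := fun i => ⟨(hx i).1.le, (hx i).2⟩
  have happ := hinv x x hxIcc hxIcc (fun i _ => hx i)
  rw [IDBAux.mixSum_empty] at happ
  simp only [Finset.prod_empty, mul_one] at happ
  have hfold : ((List.ofFn (fun i : Fin d => diffDir i (j i))).foldr
      (fun T g => T ∘ g) id f) = IDBAux.applyQ j (List.finRange d) f := by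
    rw [List.ofFn_eq_map]
    exact IDBAux.foldr_eq j f (List.finRange d)
  rw [hfold]
  have hconst : ∏ i ∈ (List.finRange d).toFinset, (((2:ℝ)^(j i))⁻¹) ^ α
      = (2:ℝ) ^ (-α * ((∑ i, j i : ℕ) : ℝ)) := by
    rw [List.toFinset_finRange]
    rw [Real.finset_prod_rpow _ _ (fun i _ => by positivity) α]
    rw [Finset.prod_inv_distrib, Finset.prod_pow_eq_pow_sum]
    rw [← Real.rpow_natCast (2:ℝ) (∑ i, j i), ← Real.rpow_neg (by norm_num)]
    rw [← Real.rpow_mul (by norm_num)]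
    congr 1
    ring
  rw [hconst] at happ
  exact happ
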